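/- Energy inequality for the stent (drug-coating) equation: let δ, P̃, l, T > 0, let g : [0,T] → ℝ be continuous, and let c : [-l,0] × [0,T] → ℝ be such that c, ∂_t c, ∂_x c, ∂_{xx} c are continuous on [-l,0] × [0,T], and suppose that ∂_t c(x,t) = δ·∂_{xx} c(x,t) for all (x,t) ∈ (-l,0) × (0,T], ∂_x c(-l,t) = 0 for all t ∈ (0,T], and ∂_x c(0,t) + P̃·c(0,t) = P̃·g(t) for all t ∈ (0,T]. Then for every ε > 0 and every t ∈ (0,T], the function t ↦ ∫_{-l}^0 c(x,t)² dx is differentiable and (1/2)·(d/dt)∫_{-l}^0 c(x,t)² dx + δ·∫_{-l}^0 (∂_x c(x,t))² dx + δ·P̃·c(0,t)² ≤ δ·P̃·(ε·c(0,t)² + g(t)²/(4ε)). -/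

import Mathlib

open MeasureTheory Set intervalIntegral Topology Filter

private lemma sliceX {f : ℝ → ℝ → ℝ} {A B : Set ℝ}
    (hf : ContinuousOn (fun p : ℝ × ℝ => f p.1 p.2) (A ×ˢ B)) {t : ℝ} (ht : t ∈ B) :
    ContinuousOn (fun y => f y t) A :=
  hf.comp ((continuous_id.prodMk continuous_const).continuousOn) (fun y hy => ⟨hy, ht⟩)

private lemma sliceT {f : ℝ → ℝ → ℝ} {A B : Set ℝ}
    (hf : ContinuousOn (fun p : ℝ × ℝ => f p.1 p.2) (A ×ˢ B)) {x : ℝ} (hx : x ∈ A) :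
    ContinuousOn (fun s => f x s) B :=
  hf.comp ((continuous_const.prodMk continuous_id).continuousOn) (fun s hs => ⟨hx, hs⟩)

/-- Energy inequality for the stent (drug-coating) equation: if `c` is a classical
solution of `∂ₜc = δ·c_xx` on `(-l,0) × (0,T]` with `c_x(-l,t) = 0` and
`c_x(0,t) + Pt·c(0,t) = Pt·g(t)`, then for every `ε > 0` and `t ∈ (0,T]` the energy
`t ↦ ∫_{-l}^0 c(x,t)² dx` is differentiable (within `[0,T]`) and
`(1/2)·(d/dt)∫ c² + δ·∫ c_x² + δ·Pt·c(0,t)² ≤ δ·Pt·(ε·c(0,t)² + g(t)²/(4ε))`. -/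
theorem stent_equation_energy_inequality
    (δ Pt l T : ℝ) (hδ : 0 < δ) (hPt : 0 < Pt) (hl : 0 < l) (hT : 0 < T)
    (g : ℝ → ℝ) (hg : ContinuousOn g (Set.Icc 0 T))
    (c ct cx cxx : ℝ → ℝ → ℝ)
    (hc : ContinuousOn (fun p : ℝ × ℝ => c p.1 p.2) (Set.Icc (-l) 0 ×ˢ Set.Icc 0 T))
    (hct : ContinuousOn (fun p : ℝ × ℝ => ct p.1 p.2) (Set.Icc (-l) 0 ×ˢ Set.Icc 0 T))
    (hcx : ContinuousOn (fun p : ℝ × ℝ => cx p.1 p.2) (Set.Icc (-l) 0 ×ˢ Set.Icc 0 T))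
    (hcxx : ContinuousOn (fun p : ℝ × ℝ => cxx p.1 p.2) (Set.Icc (-l) 0 ×ˢ Set.Icc 0 T))
    (hdt : ∀ x ∈ Set.Icc (-l) 0, ∀ t ∈ Set.Icc 0 T,
      HasDerivWithinAt (fun s => c x s) (ct x t) (Set.Icc 0 T) t)
    (hdx : ∀ x ∈ Set.Icc (-l) 0, ∀ t ∈ Set.Icc 0 T,
      HasDerivWithinAt (fun y => c y t) (cx x t) (Set.Icc (-l) 0) x)
    (hdxx : ∀ x ∈ Set.Icc (-l) 0, ∀ t ∈ Set.Icc 0 T,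
      HasDerivWithinAt (fun y => cx y t) (cxx x t) (Set.Icc (-l) 0) x)
    (hpde : ∀ x ∈ Set.Ioo (-l) 0, ∀ t ∈ Set.Ioc 0 T, ct x t = δ * cxx x t)
    (hbcl : ∀ t ∈ Set.Ioc 0 T, cx (-l) t = 0)
    (hbc0 : ∀ t ∈ Set.Ioc 0 T, cx 0 t + Pt * c 0 t = Pt * g t) :
    ∀ ε > (0 : ℝ), ∀ t ∈ Set.Ioc 0 T,
      ∃ d : ℝ,
        HasDerivWithinAt (fun s => ∫ x in (-l)..0, (c x s) ^ 2) d (Set.Icc 0 T) t ∧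
        (1 / 2) * d + δ * (∫ x in (-l)..0, (cx x t) ^ 2) + δ * Pt * (c 0 t) ^ 2 ≤
          δ * Pt * (ε * (c 0 t) ^ 2 + (g t) ^ 2 / (4 * ε)) := by
  intro ε hε t ht
  have ht' : t ∈ Set.Icc 0 T := ⟨ht.1.le, ht.2⟩
  have hal : (-l : ℝ) ≤ 0 := by linarith
  have h0T : (0 : ℝ) ≤ T := hT.le
  have h0T' : (0 : ℝ) ∈ Set.Icc (0:ℝ) T := ⟨le_rfl, h0T⟩
  -- joint continuity of the integrand 2 c ct
  have hh : ContinuousOn (fun p : ℝ × ℝ => 2 * c p.1 p.2 * ct p.1 p.2)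
      (Set.Icc (-l) 0 ×ˢ Set.Icc 0 T) := (continuousOn_const.mul hc).mul hct
  set G : ℝ → ℝ := fun u => ∫ x in (-l)..0, 2 * c x u * ct x u with hG
  -- Step A : inner FTC in time
  have keyA : ∀ x ∈ Set.Icc (-l) 0, ∀ s ∈ Set.Icc (0:ℝ) T,
      (∫ u in (0:ℝ)..s, 2 * c x u * ct x u) = c x s ^ 2 - c x 0 ^ 2 := by
    intro x hx s hs
    have hsub : Set.Icc (0:ℝ) s ⊆ Set.Icc 0 T := Set.Icc_subset_Icc le_rfl hs.2
    have hcont : ContinuousOn (fun u => c x u ^ 2) (Set.Icc 0 s) :=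
      ((sliceT hc hx).mono hsub).pow 2
    have hint : IntervalIntegrable (fun u => 2 * c x u * ct x u) volume 0 s := by
      apply ContinuousOn.intervalIntegrable
      have : Set.uIcc (0:ℝ) s ⊆ Set.Icc 0 T := by
        rw [Set.uIcc_of_le hs.1]; exact hsub
      exact ((continuousOn_const.mul (sliceT hc hx)).mul (sliceT hct hx)).mono this
    refine integral_eq_sub_of_hasDeriv_right_of_le hs.1 hcont ?_ hint
    intro u hu
    have huT : u ∈ Set.Icc (0:ℝ) T := ⟨hu.1.le, (hu.2.le.trans hs.2)⟩
    have hnh : Set.Icc (0:ℝ) T ∈ 𝓝 u := Icc_mem_nhds hu.1 (lt_of_lt_of_le hu.2 hs.2)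
    have hd : HasDerivAt (fun v => c x v) (ct x u) u := (hdt x hx u huT).hasDerivAt hnh
    have h2 := (hd.pow 2).hasDerivWithinAt (s := Set.Ioi u)
    convert h2 using 1
    · rfl
    · push_cast
      ring
  -- Step B : Fubini
  have keyB : ∀ s ∈ Set.Icc (0:ℝ) T,
      (∫ x in (-l)..(0:ℝ), ∫ u in (0:ℝ)..s, 2 * c x u * ct x u)
        = ∫ u in (0:ℝ)..s, G u := by
    intro s hs
    have hKc : ContinuousOn (fun p : ℝ × ℝ => 2 * c p.1 p.2 * ct p.1 p.2)
        (Set.Icc (-l) 0 ×ˢ Set.Icc 0 s) :=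
      hh.mono (Set.prod_mono subset_rfl (Set.Icc_subset_Icc le_rfl hs.2))
    have hK : IntegrableOn (fun p : ℝ × ℝ => 2 * c p.1 p.2 * ct p.1 p.2)
        (Set.Icc (-l) 0 ×ˢ Set.Icc 0 s) volume :=
      hKc.integrableOn_compact (isCompact_Icc.prod isCompact_Icc)
    have hint2 : Integrable (Function.uncurry fun x u => 2 * c x u * ct x u)
        ((volume.restrict (Set.Ioc (-l) 0)).prod (volume.restrict (Set.Ioc 0 s))) := by
      rw [Measure.prod_restrict]
      have := (hK.mono_set
        (Set.prod_mono Set.Ioc_subset_Icc_self Set.Ioc_subset_Icc_self))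
      rw [Measure.volume_eq_prod] at this
      exact this
    simp only [hG, intervalIntegral.integral_of_le hal, intervalIntegral.integral_of_le hs.1]
    exact MeasureTheory.integral_integral_swap hint2
  -- interval integrability on `[-l,0]` of continuous slices
  have intC : ∀ f : ℝ → ℝ, ContinuousOn f (Set.Icc (-l) 0) →
      IntervalIntegrable f volume (-l) 0 := by
    intro f hf
    apply ContinuousOn.intervalIntegrable
    rwa [Set.uIcc_of_le hal]
  -- Step C : representation of the energy
  have keyC : ∀ s ∈ Set.Icc (0:ℝ) T,
      (∫ x in (-l)..0, c x s ^ 2)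
        = (∫ x in (-l)..0, c x 0 ^ 2) + ∫ u in (0:ℝ)..s, G u := by
    intro s hs
    have e1 : (∫ x in (-l)..0, (c x s ^ 2 - c x 0 ^ 2))
        = ∫ x in (-l)..(0:ℝ), ∫ u in (0:ℝ)..s, 2 * c x u * ct x u := by
      apply intervalIntegral.integral_congr
      intro x hx
      rw [Set.uIcc_of_le hal] at hx
      exact (keyA x hx s hs).symm
    have i1 : IntervalIntegrable (fun x => c x s ^ 2) volume (-l) 0 :=
      intC _ ((sliceX hc hs).pow 2)
    have i0 : IntervalIntegrable (fun x => c x 0 ^ 2) volume (-l) 0 :=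
      intC _ ((sliceX hc h0T').pow 2)
    rw [intervalIntegral.integral_sub i1 i0] at e1
    have := keyB s hs
    linarith [e1, this]
  -- Step D : continuity of G on [0,T]
  have keyD : ContinuousOn G (Set.Icc 0 T) := by
    have hGeq : G = fun u => ∫ x in Set.Ioc (-l) 0, 2 * c x u * ct x u := by
      funext u; exact intervalIntegral.integral_of_le hal
    rw [hGeq]
    obtain ⟨M, hM⟩ := (isCompact_Icc.prod isCompact_Icc).exists_bound_of_continuousOn hh
    apply MeasureTheory.continuousOn_of_dominated (bound := fun _ => M)
    · intro u hu
      have : ContinuousOn (fun x => 2 * c x u * ct x u) (Set.Icc (-l) 0) :=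
        (continuousOn_const.mul (sliceX hc hu)).mul (sliceX hct hu)
      exact (this.aestronglyMeasurable measurableSet_Icc).mono_measure
        (Measure.restrict_mono Set.Ioc_subset_Icc_self le_rfl)
    · intro u hu
      filter_upwards [MeasureTheory.ae_restrict_mem measurableSet_Ioc] with x hx
      exact hM (x, u) ⟨Set.Ioc_subset_Icc_self hx, hu⟩
    · exact MeasureTheory.integrableOn_const measure_Ioc_lt_top.ne
    · filter_upwards [MeasureTheory.ae_restrict_mem measurableSet_Ioc] with x hx
      exact sliceT (f := fun x u => 2 * c x u * ct x u) hh (Set.Ioc_subset_Icc_self hx)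
  have hGint : ∀ s ∈ Set.Icc (0:ℝ) T, IntervalIntegrable G volume 0 s := by
    intro s hs
    apply ContinuousOn.intervalIntegrable
    apply keyD.mono
    rw [Set.uIcc_of_le hs.1]
    exact Set.Icc_subset_Icc le_rfl hs.2
  -- Step E : derivative of the primitive of G
  have keyE : HasDerivWithinAt (fun s => ∫ u in (0:ℝ)..s, G u) (G t) (Set.Icc 0 T) t := by
    rcases eq_or_lt_of_le ht.2 with hEq | hlt
    · subst hEq
      have h1 : ContinuousWithinAt G (Set.Iic t) t := by
        have h2 := keyD t ht'
        rwa [ContinuousWithinAt, nhdsWithin_Icc_eq_nhdsLE ht.1] at h2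
      have hmeas : StronglyMeasurableAtFilter G (𝓝[Set.Iic t] t) volume := by
        refine ⟨Set.Icc 0 t, ?_, keyD.aestronglyMeasurable measurableSet_Icc⟩
        rw [← nhdsWithin_Icc_eq_nhdsLE ht.1]
        exact self_mem_nhdsWithin
      have := intervalIntegral.integral_hasDerivWithinAt_right (s := Set.Iic t)
        (t := Set.Iic t) (hGint t ht') hmeas h1
      exact this.mono Set.Icc_subset_Iic_self
    · have hmem : Set.Icc (0:ℝ) T ∈ 𝓝 t := Icc_mem_nhds ht.1 hlt
      have hct' : ContinuousAt G t := keyD.continuousAt hmem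
      have hmeas : StronglyMeasurableAtFilter G (𝓝 t) volume :=
        ⟨Set.Icc 0 T, hmem, keyD.aestronglyMeasurable measurableSet_Icc⟩
      exact (intervalIntegral.integral_hasDerivAt_right (hGint t ht') hmeas
        hct').hasDerivWithinAt
  -- the energy has derivative G t
  have keyF : HasDerivWithinAt (fun s => ∫ x in (-l)..0, (c x s) ^ 2) (G t)
      (Set.Icc 0 T) t := by
    have h1 := keyE.const_add (∫ x in (-l)..0, c x 0 ^ 2)
    exact h1.congr (fun s hs => keyC s hs) (keyC t ht')
  -- Step G : integration by parts
  have keyIBP : (∫ x in (-l)..0, (2 * δ * (cx x t) ^ 2 + 2 * δ * (c x t * cxx x t)))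
      = 2 * δ * (c 0 t * cx 0 t) := by
    have hcont : ContinuousOn (fun y => 2 * δ * (c y t * cx y t)) (Set.Icc (-l) 0) :=
      continuousOn_const.mul ((sliceX hc ht').mul (sliceX hcx ht'))
    have hint : IntervalIntegrable
        (fun x => 2 * δ * (cx x t) ^ 2 + 2 * δ * (c x t * cxx x t)) volume (-l) 0 :=
      intC _ ((continuousOn_const.mul ((sliceX hcx ht').pow 2)).add
        (continuousOn_const.mul ((sliceX hc ht').mul (sliceX hcxx ht'))))
    have h := integral_eq_sub_of_hasDeriv_right_of_le hal hcont ?_ hint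
    · rw [h, hbcl t ht]; ring
    · intro x hx
      have hxI : x ∈ Set.Icc (-l) 0 := ⟨hx.1.le, hx.2.le⟩
      have hnh : Set.Icc (-l) (0:ℝ) ∈ 𝓝 x := Icc_mem_nhds hx.1 hx.2
      have h1 : HasDerivAt (fun y => c y t) (cx x t) x := (hdx x hxI t ht').hasDerivAt hnh
      have h2 : HasDerivAt (fun y => cx y t) (cxx x t) x := (hdxx x hxI t ht').hasDerivAt hnh
      have h3 := ((h1.mul h2).const_mul (2 * δ)).hasDerivWithinAt (s := Set.Ioi x)
      convert h3 using 1
      · rfl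
      · ring
  -- compute G t
  have icx2 : IntervalIntegrable (fun x => (cx x t) ^ 2) volume (-l) 0 :=
    intC _ ((sliceX hcx ht').pow 2)
  have keyGt : G t = 2 * δ * (c 0 t * cx 0 t) - 2 * δ * ∫ x in (-l)..0, (cx x t) ^ 2 := by
    have e1 : G t = ∫ x in (-l)..0, 2 * δ * (c x t * cxx x t) := by
      apply intervalIntegral.integral_congr_ae
      have h0 : (volume : Measure ℝ) {(0:ℝ)} = 0 := measure_singleton 0
      filter_upwards [MeasureTheory.compl_mem_ae_iff.2 h0] with x hx hmem
      rw [Set.uIoc_of_le hal] at hmem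
      have hx0 : x ≠ 0 := hx
      have hxo : x ∈ Set.Ioo (-l) 0 := ⟨hmem.1, lt_of_le_of_ne hmem.2 hx0⟩
      rw [hpde x hxo t ht]; ring
    have i1 : IntervalIntegrable (fun x => 2 * δ * (cx x t) ^ 2) volume (-l) 0 :=
      intC _ (continuousOn_const.mul ((sliceX hcx ht').pow 2))
    have i2 : IntervalIntegrable (fun x => 2 * δ * (c x t * cxx x t)) volume (-l) 0 :=
      intC _ (continuousOn_const.mul ((sliceX hc ht').mul (sliceX hcxx ht')))
    have e2 : (∫ x in (-l)..0, (2 * δ * (cx x t) ^ 2 + 2 * δ * (c x t * cxx x t)))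
        = (∫ x in (-l)..0, 2 * δ * (cx x t) ^ 2)
          + ∫ x in (-l)..0, 2 * δ * (c x t * cxx x t) :=
      intervalIntegral.integral_add i1 i2
    have e3 : (∫ x in (-l)..0, 2 * δ * (cx x t) ^ 2)
        = 2 * δ * ∫ x in (-l)..0, (cx x t) ^ 2 :=
      intervalIntegral.integral_const_mul _ _
    rw [e1]
    have := keyIBP
    rw [e2, e3] at this
    linarith
  -- conclude
  refine ⟨G t, keyF, ?_⟩
  have hb' : cx 0 t = Pt * g t - Pt * c 0 t := by linarith [hbc0 t ht]
  have hsum : (1 / 2) * (G t) + δ * (∫ x in (-l)..0, (cx x t) ^ 2)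
      + δ * Pt * (c 0 t) ^ 2 = δ * Pt * (c 0 t * g t) := by
    rw [keyGt, hb']; ring
  rw [hsum]
  have h4 : (0:ℝ) < 4 * ε := by linarith
  have young : c 0 t * g t ≤ ε * (c 0 t) ^ 2 + (g t) ^ 2 / (4 * ε) := by
    rw [← sub_le_iff_le_add', le_div_iff₀ h4]
    nlinarith [sq_nonneg (2 * ε * (c 0 t) - g t)]
  exact mul_le_mul_of_nonneg_left young (mul_pos hδ hPt).le
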